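/- In a metric transportation game with n players and m buses, for any Nash equilibrium σ and any optimal outcome σ* for the utilitarian social cost U, it holds that U(σ) ≤ (2n/m + 1)·U(σ*). Consequently the Price of Anarchy for U is O(n/m). -/

import Mathlib

open Finset

/-- Length of a bus route that visits the points of `l` in order and then ends at the
destination `t` (the initial segment from the depot is ignored). -/
noncomputable def routeLen {V : Type*} [PseudoMetricSpace V] (t : V) (l : List V) : ℝ :=
  ∑ i ∈ Finset.range l.length, dist (l.getD i t) (l.getD (i + 1) t)

/-- The route of bus `j` under outcome `σ`: the players that chose bus `j`, in the order
given by the fixed permutation list `ord j` of bus `j`. -/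
def busRoute {n m : ℕ} (ord : Fin m → List (Fin n)) (σ : Fin n → Fin m) (j : Fin m) :
    List (Fin n) :=
  (ord j).filter (fun i => decide (σ i = j))

/-- `ord` gives, for every bus, a permutation of all the players. -/
def validOrd {n m : ℕ} (ord : Fin m → List (Fin n)) : Prop :=
  ∀ j : Fin m, (ord j).Nodup ∧ ∀ i : Fin n, i ∈ ord j

/-- The cost of player `i` under outcome `σ`: the distance traveled by `i`'s bus from the
location of `i` to the destination `t`. -/
noncomputable def playerCost {V : Type*} [PseudoMetricSpace V] {n m : ℕ}
    (x : Fin n → V) (t : V) (ord : Fin m → List (Fin n)) (σ : Fin n → Fin m)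
    (i : Fin n) : ℝ :=
  routeLen t
    (((busRoute ord σ (σ i)).drop ((busRoute ord σ (σ i)).idxOf i)).map x)

/-- The utilitarian social cost: the sum of the costs of all players. -/
noncomputable def socialU {V : Type*} [PseudoMetricSpace V] {n m : ℕ}
    (x : Fin n → V) (t : V) (ord : Fin m → List (Fin n)) (σ : Fin n → Fin m) : ℝ :=
  ∑ i : Fin n, playerCost x t ord σ i

/-- The egalitarian social cost: the largest cost of a player. -/
noncomputable def socialE {V : Type*} [PseudoMetricSpace V] {n m : ℕ}
    (x : Fin n → V) (t : V) (ord : Fin m → List (Fin n)) (σ : Fin n → Fin m) : ℝ :=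
  ⨆ i : Fin n, playerCost x t ord σ i

/-- `σ` is a (pure) Nash equilibrium: no player can decrease her cost by unilaterally
switching to another bus. -/
def isNash {V : Type*} [PseudoMetricSpace V] {n m : ℕ}
    (x : Fin n → V) (t : V) (ord : Fin m → List (Fin n)) (σ : Fin n → Fin m) : Prop :=
  ∀ i : Fin n, ∀ j : Fin m,
    playerCost x t ord σ i ≤ playerCost x t ord (Function.update σ i j) i

lemma routeLen_nil {V : Type*} [PseudoMetricSpace V] (t : V) : routeLen t ([] : List V) = 0 := by
  simp [routeLen]

lemma routeLen_cons {V : Type*} [PseudoMetricSpace V] (t a : V) (l : List V) :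
    routeLen t (a :: l) = dist a (l.getD 0 t) + routeLen t l := by
  unfold routeLen
  rw [List.length_cons, Finset.sum_range_succ', add_comm]
  exact congrArg₂ (· + ·) (by simp) (Finset.sum_congr rfl fun i _ => by simp)

lemma routeLen_nonneg {V : Type*} [PseudoMetricSpace V] (t : V) (l : List V) :
    0 ≤ routeLen t l :=
  Finset.sum_nonneg fun _ _ => dist_nonneg

lemma dist_head_le_routeLen {V : Type*} [PseudoMetricSpace V] (t : V) (l : List V) :
    dist (l.getD 0 t) t ≤ routeLen t l := by
  induction l with
  | nil => simp [routeLen_nil]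
  | cons a l ih =>
      rw [routeLen_cons]
      calc dist ((a :: l).getD 0 t) t = dist a t := by simp
        _ ≤ dist a (l.getD 0 t) + dist (l.getD 0 t) t := dist_triangle _ _ _
        _ ≤ dist a (l.getD 0 t) + routeLen t l := by linarith

lemma routeLen_drop {V : Type*} [PseudoMetricSpace V] (t : V) :
    ∀ (k : ℕ) (l : List V),
    dist t ((l.drop k).getD 0 t) + routeLen t (l.drop k) ≤ dist t (l.getD 0 t) + routeLen t l := by
  intro k
  induction k with
  | zero => intro l; simp
  | succ k ih =>
      intro l
      cases l with
      | nil => simp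
      | cons a l =>
          calc dist t (((a :: l).drop (k+1)).getD 0 t) + routeLen t ((a :: l).drop (k+1))
              = dist t ((l.drop k).getD 0 t) + routeLen t (l.drop k) := by simp
            _ ≤ dist t (l.getD 0 t) + routeLen t l := ih l
            _ ≤ dist t a + (dist a (l.getD 0 t) + routeLen t l) := by
                have := dist_triangle t a (l.getD 0 t); linarith
            _ = dist t ((a :: l).getD 0 t) + routeLen t (a :: l) := by
                rw [routeLen_cons]; simp

lemma routeLen_le_twice_sum {V : Type*} [PseudoMetricSpace V] (t : V) (l : List V) :
    dist t (l.getD 0 t) + routeLen t l ≤ 2 * (l.map (fun v => dist v t)).sum := by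
  induction l with
  | nil => simp [routeLen_nil]
  | cons a l ih =>
      rw [routeLen_cons]
      have h1 : dist a (l.getD 0 t) ≤ dist a t + dist t (l.getD 0 t) := dist_triangle _ _ _
      have h2 : dist t a = dist a t := dist_comm _ _
      simp only [List.getD_cons_zero, List.map_cons, List.sum_cons]
      linarith

lemma indexOf_append_notmem {n : ℕ} (i : Fin n) :
    ∀ (A : List (Fin n)), i ∉ A → ∀ B : List (Fin n), (A ++ i :: B).idxOf i = A.length := by
  intro A
  induction A with
  | nil => intro _ B; simp
  | cons a A ih =>
      intro h B
      have ha : a ≠ i := fun e => h (e ▸ (List.mem_cons_self (a := a) (l := A)))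
      have hA : i ∉ A := fun e => h (List.mem_cons_of_mem a e)
      simp [List.idxOf_cons, ha, ih hA B]

lemma deviation_bound {V : Type*} [PseudoMetricSpace V] {n m : ℕ}
    (x : Fin n → V) (t : V) (ord : Fin m → List (Fin n)) (hord : validOrd ord)
    (σ : Fin n → Fin m) (i : Fin n) (j : Fin m) :
    playerCost x t ord (Function.update σ i j) i ≤
      dist (x i) t + (dist t (((busRoute ord σ j).map x).getD 0 t)
        + routeLen t ((busRoute ord σ j).map x)) := by
  set σ' := Function.update σ i j with hσ'
  have hj' : σ' i = j := Function.update_self i j σ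
  obtain ⟨ω₁, ω₂, hsplit⟩ := List.append_of_mem ((hord j).2 i)
  have hnd : (ord j).Nodup := (hord j).1
  rw [hsplit] at hnd
  have hi1 : i ∉ ω₁ := by
    intro h
    exact (List.disjoint_of_nodup_append hnd) h ((List.mem_cons_self (a := i) (l := ω₂)))
  have hne1 : ∀ k ∈ ω₁, k ≠ i := fun k hk e => hi1 (e ▸ hk)
  have hne2 : ∀ k ∈ ω₂, k ≠ i := by
    intro k hk e
    have := (List.nodup_append.mp hnd).2.1
    exact (List.nodup_cons.mp this).1 (e ▸ hk)
  set p : Fin n → Bool := fun k => decide (σ k = j) with hp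
  set p' : Fin n → Bool := fun k => decide (σ' k = j) with hp'
  have hcong1 : List.filter p' ω₁ = List.filter p ω₁ :=
    List.filter_congr fun k hk => by
      simp [hp', hp, hσ', Function.update_of_ne (hne1 k hk)]
  have hcong2 : List.filter p' ω₂ = List.filter p ω₂ :=
    List.filter_congr fun k hk => by
      simp [hp', hp, hσ', Function.update_of_ne (hne2 k hk)]
  set A := List.filter p ω₁ with hA
  set B := List.filter p ω₂ with hB
  have hlb : busRoute ord σ' j = A ++ i :: B := by
    rw [busRoute, hsplit, List.filter_append, List.filter_cons_of_pos (by simp [hp', hj']),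
      hcong1, hcong2]
  have hiA : i ∉ A := fun h => hi1 (List.mem_of_mem_filter h)
  have hdrop : (busRoute ord σ' j).drop ((busRoute ord σ' j).idxOf i) = i :: B := by
    rw [hlb, indexOf_append_notmem i A hiA B]; exact List.drop_left (l₁ := A) (l₂ := i :: B)
  -- B is a suffix of busRoute ord σ j
  have hsuffix : ∃ c, B = (busRoute ord σ j).drop c := by
    by_cases h : σ i = j
    · refine ⟨A.length + 1, ?_⟩
      have : busRoute ord σ j = (A ++ [i]) ++ B := by
        rw [busRoute, hsplit, List.filter_append, List.filter_cons_of_pos (by simp [hp, h])]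
        simp [hA, hB, hp]
      rw [this]
      have : (A ++ [i]).length = A.length + 1 := by simp
      rw [← this, List.drop_left]
    · refine ⟨A.length, ?_⟩
      have : busRoute ord σ j = A ++ B := by
        rw [busRoute, hsplit, List.filter_append, List.filter_cons_of_neg (by simp [hp, h])]
      rw [this, List.drop_left]
  obtain ⟨c, hc⟩ := hsuffix
  have hPC : playerCost x t ord σ' i = routeLen t (x i :: B.map x) := by
    rw [playerCost, hj', hdrop, List.map_cons]
  rw [hPC, routeLen_cons]
  have h1 : dist (x i) ((B.map x).getD 0 t) ≤
      dist (x i) t + dist t ((B.map x).getD 0 t) := dist_triangle _ _ _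
  have h2 : dist t ((B.map x).getD 0 t) + routeLen t (B.map x) ≤
      dist t (((busRoute ord σ j).map x).getD 0 t) + routeLen t ((busRoute ord σ j).map x) := by
    have : B.map x = ((busRoute ord σ j).map x).drop c := by
      rw [hc, List.map_drop]
    rw [this]
    exact routeLen_drop t c _
  linarith

lemma dist_le_playerCost {V : Type*} [PseudoMetricSpace V] {n m : ℕ}
    (x : Fin n → V) (t : V) (ord : Fin m → List (Fin n)) (hord : validOrd ord)
    (σ : Fin n → Fin m) (i : Fin n) :
    dist (x i) t ≤ playerCost x t ord σ i := by
  set lb := busRoute ord σ (σ i) with hlb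
  have hmem : i ∈ lb := by
    rw [hlb, busRoute, List.mem_filter]
    exact ⟨(hord (σ i)).2 i, by simp⟩
  have hlt : lb.idxOf i < lb.length := List.idxOf_lt_length_iff.mpr hmem
  have hdrop : lb.drop (lb.idxOf i) = i :: lb.drop (lb.idxOf i + 1) := by
    rw [List.drop_eq_getElem_cons hlt, List.getElem_idxOf hlt]
  rw [playerCost, ← hlb, hdrop, List.map_cons]
  have := dist_head_le_routeLen t (x i :: (lb.drop (lb.idxOf i + 1)).map x)
  simpa using this

lemma key_bound {V : Type*} [PseudoMetricSpace V] {n m : ℕ}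
    (x : Fin n → V) (t : V) (ord : Fin m → List (Fin n)) (hord : validOrd ord)
    (σ : Fin n → Fin m) (i : Fin n) (j : Fin m) :
    playerCost x t ord (Function.update σ i j) i ≤
      dist (x i) t + 2 * ∑ k ∈ Finset.univ.filter (fun k => σ k = j), dist (x k) t := by
  refine (deviation_bound x t ord hord σ i j).trans ?_
  have h2 := routeLen_le_twice_sum t ((busRoute ord σ j).map x)
  have hnd : (busRoute ord σ j).Nodup := (hord j).1.filter _
  have hsum : (((busRoute ord σ j).map x).map (fun v => dist v t)).sum
      = ∑ k ∈ Finset.univ.filter (fun k => σ k = j), dist (x k) t := by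
    rw [List.map_map]
    rw [← List.sum_toFinset _ hnd]
    refine Finset.sum_congr ?_ (fun _ _ => rfl)
    ext k
    simp [busRoute, List.mem_filter, (hord j).2 k]
  rw [hsum] at h2
  linarith

/-- for any Nash equilibrium `σ` and any optimal outcome `σ*` for the
utilitarian social cost `U`, `U(σ) ≤ (2n/m + 1)·U(σ*)`; hence `PoA(U) = O(n/m)`. -/
theorem stmt6 {V : Type*} [MetricSpace V] {n m : ℕ} (hm : 1 ≤ m)
    (x : Fin n → V) (t : V) (ord : Fin m → List (Fin n)) (hord : validOrd ord)
    (σ σstar : Fin n → Fin m) (hNE : isNash x t ord σ)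
    (hopt : ∀ σ' : Fin n → Fin m, socialU x t ord σstar ≤ socialU x t ord σ') :
    socialU x t ord σ ≤ (2 * (n : ℝ) / (m : ℝ) + 1) * socialU x t ord σstar := by
  have hm0 : (0 : ℝ) < m := by exact_mod_cast Nat.lt_of_lt_of_le Nat.zero_lt_one hm
  set T : ℝ := ∑ k : Fin n, dist (x k) t with hT
  set OPT : ℝ := socialU x t ord σstar with hOPT
  have hT_nonneg : 0 ≤ T := Finset.sum_nonneg fun _ _ => dist_nonneg
  have hT_le : T ≤ OPT :=
    Finset.sum_le_sum fun i _ => dist_le_playerCost x t ord hord σstar i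
  -- per-player averaged bound
  have hkey : ∀ i : Fin n, (m : ℝ) * playerCost x t ord σ i ≤ (m : ℝ) * dist (x i) t + 2 * T := by
    intro i
    have h1 : (m : ℝ) * playerCost x t ord σ i = ∑ _j : Fin m, playerCost x t ord σ i := by
      rw [Finset.sum_const, Finset.card_univ, Fintype.card_fin, nsmul_eq_mul]
    have h2 : ∑ _j : Fin m, playerCost x t ord σ i ≤
        ∑ j : Fin m, (dist (x i) t + 2 * ∑ k ∈ Finset.univ.filter (fun k => σ k = j), dist (x k) t) :=
      Finset.sum_le_sum fun j _ => (hNE i j).trans (key_bound x t ord hord σ i j)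
    have h3 : ∑ j : Fin m, (dist (x i) t + 2 * ∑ k ∈ Finset.univ.filter (fun k => σ k = j), dist (x k) t)
        = (m : ℝ) * dist (x i) t + 2 * T := by
      rw [Finset.sum_add_distrib, Finset.sum_const, Finset.card_univ, Fintype.card_fin,
        nsmul_eq_mul, ← Finset.mul_sum, Finset.sum_fiberwise Finset.univ σ (fun k => dist (x k) t)]
    linarith [h1, h2, h3]
  have hsumkey : (m : ℝ) * socialU x t ord σ ≤ (m : ℝ) * T + 2 * n * T := by
    have := Finset.sum_le_sum (fun i (_ : i ∈ Finset.univ) => hkey i)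
    rw [Finset.sum_add_distrib, ← Finset.mul_sum, ← Finset.mul_sum, Finset.sum_const,
      Finset.card_univ, Fintype.card_fin, nsmul_eq_mul] at this
    rw [socialU]
    linarith
  have hcoef : (2 * (n : ℝ) / (m : ℝ) + 1) * OPT = ((2 * n + m) * OPT) / m := by
    field_simp
    try ring
  rw [hcoef, le_div_iff₀ hm0]
  have hfin : ((m : ℝ) + 2 * n) * T ≤ ((m : ℝ) + 2 * n) * OPT := by
    have : (0:ℝ) ≤ (m : ℝ) + 2 * n := by positivity
    exact mul_le_mul_of_nonneg_left hT_le this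
  nlinarith [hsumkey, hfin]
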